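/- Let p ≡ 1 (mod 8) and q ≡ 7 (mod 8) be primes with (p/q) = −1. If x, y are integers with x² − 2pq·y² = 1 and x ≥ 2, then the system x − 1 = p·y₁², x + 1 = 2q·y₂² has no solution in integers y₁, y₂; likewise the system x + 1 = p·y₁², x − 1 = 2q·y₂² has no integer solution. -/

import Mathlib

/-- For primes `p ≡ 1 (mod 8)`, `q ≡ 7 (mod 8)` with `(p/q) = −1`, and integers
`x, y` with `x² − 2pq·y² = 1` and `x ≥ 2`, neither the system
`x − 1 = p·y₁², x + 1 = 2q·y₂²` nor the system `x + 1 = p·y₁², x − 1 = 2q·y₂²`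
has an integer solution. -/
theorem no_mixed_factorization (p q : ℕ) [Fact p.Prime] [Fact q.Prime]
    (hp : p % 8 = 1) (hq : q % 8 = 7) (hleg : legendreSym q p = -1)
    (x y : ℤ) (hPell : x ^ 2 - 2 * p * q * y ^ 2 = 1) (hx : 2 ≤ x) :
    (¬ ∃ y₁ y₂ : ℤ, x - 1 = p * y₁ ^ 2 ∧ x + 1 = 2 * q * y₂ ^ 2) ∧
    (¬ ∃ y₁ y₂ : ℤ, x + 1 = p * y₁ ^ 2 ∧ x - 1 = 2 * q * y₂ ^ 2) := by
  have hp2 : p ≠ 2 := by rintro rfl; omega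
  have hq2 : q ≠ 2 := by rintro rfl; omega
  have hp4 : p % 4 = 1 := by omega
  have hrec : legendreSym p (q : ℤ) = -1 := by
    rw [← legendreSym.quadratic_reciprocity_one_mod_four hp4 hq2, hleg]
  have htwo : ((2 : ℕ) : ZMod p) ≠ 0 := by
    rw [Ne, ZMod.natCast_eq_zero_iff]
    exact fun h => hp2 ((Nat.prime_dvd_prime_iff_eq Fact.out Nat.prime_two).mp h)
  have htwo' : (2 : ZMod p) ≠ 0 := by exact_mod_cast htwo
  have hqp : (((q : ℤ)) : ZMod p) ≠ 0 := by
    intro h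
    rw [← legendreSym.eq_zero_iff p (q : ℤ)] at h
    omega
  have hnegone : IsSquare (-1 : ZMod p) :=
    ZMod.exists_sq_eq_neg_one_iff.mpr (by omega)
  have hqp' : ((q : ℕ) : ZMod p) ≠ 0 := by exact_mod_cast hqp
  have key : ∀ y₂ : ℤ, ∀ c : ZMod p, IsSquare c → c ≠ 0 →
      ((q : ℕ) : ZMod p) * (y₂ : ZMod p) ^ 2 = c → False := by
    intro y₂ c hcsq hc0 hqy
    obtain ⟨s, hs⟩ := hcsq
    have hy : (y₂ : ZMod p) ≠ 0 := by
      intro h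
      rw [h] at hqy
      simp at hqy
      exact hc0 hqy.symm
    have hsq : IsSquare (((q : ℕ)) : ZMod p) := by
      refine ⟨s * (y₂ : ZMod p)⁻¹, ?_⟩
      field_simp
      rw [hs] at hqy
      linear_combination hqy
    rw [← legendreSym.eq_one_iff' p hqp'] at hsq
    omega
  constructor
  · rintro ⟨y₁, y₂, h1, h2⟩
    have e1 : ((x : ZMod p)) - 1 = 0 := by
      have := congrArg (fun z : ℤ => (z : ZMod p)) h1
      push_cast at this
      simpa [ZMod.natCast_self] using this
    have e2 : (2 : ZMod p) * ((q : ℕ) : ZMod p) * (y₂ : ZMod p) ^ 2 = 2 := by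
      have := congrArg (fun z : ℤ => (z : ZMod p)) h2
      push_cast at this
      push_cast
      linear_combination -this + e1
    have : ((q : ℕ) : ZMod p) * (y₂ : ZMod p) ^ 2 = 1 := by
      apply mul_left_cancel₀ htwo'
      linear_combination e2
    exact key y₂ 1 IsSquare.one one_ne_zero this
  · rintro ⟨y₁, y₂, h1, h2⟩
    have e1 : ((x : ZMod p)) + 1 = 0 := by
      have := congrArg (fun z : ℤ => (z : ZMod p)) h1
      push_cast at this
      simpa [ZMod.natCast_self] using this
    have e2 : (2 : ZMod p) * ((q : ℕ) : ZMod p) * (y₂ : ZMod p) ^ 2 = -2 := by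
      have := congrArg (fun z : ℤ => (z : ZMod p)) h2
      push_cast at this
      push_cast
      linear_combination -this + e1
    have : ((q : ℕ) : ZMod p) * (y₂ : ZMod p) ^ 2 = -1 := by
      apply mul_left_cancel₀ htwo'
      linear_combination e2
    exact key y₂ (-1) hnegone (neg_ne_zero.mpr one_ne_zero) this
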